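/- Let (U, I) be an independence system with element values v_i > 0, costs c_i ≥ 0, and budget B > 0, let F = {i : c_i ≤ B}, let i* ∈ F have maximum value v_{i*}, let OPT = max{v(T) : T ∈ I, T ⊆ F, Σ_{i∈T} c_i ≤ B}, OPT' = max{v(T) : T ∈ I, T ⊆ F \ {i*}, Σ_{i∈T} c_i ≤ B}, and v_{i'} = max{v_i : i ∈ F \ {i*}} (taken as 0 if F \ {i*} is empty). If ρ ≥ 1 and v_G is a real number with v_G ≥ (1/(2ρ))·(OPT' - v_{i'}), then (2ρ + 2)·max{v_{i*}, v_G} ≥ OPT. -/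
import Mathlib


open Finset

/-- **Det-ISK's approximation for Independence System Knapsack.**
Let `F` be the set of feasible elements, `i* ∈ F` of maximum value, `OPT` (resp. `OPT'`)
the maximum value of a budget-feasible independent set inside `F` (resp. `F \ {i*}`), and
`v_{i'}` the maximum value of an element of `F \ {i*}` (or `0` if none exists). If
`ρ ≥ 1` and `v_G ≥ (1/(2ρ))(OPT' - v_{i'})`, then `(2ρ + 2)·max{v_{i*}, v_G} ≥ OPT`. -/
theorem det_isk_approximation_independence_system (U : Type) [Fintype U] [DecidableEq U]
    (I : Set (Finset U)) (hI₁ : ∅ ∈ I)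
    (hI₂ : ∀ A B : Finset U, B ∈ I → A ⊆ B → A ∈ I)
    (v c : U → ℝ) (hv : ∀ i, 0 < v i) (hc : ∀ i, 0 ≤ c i) (B : ℝ) (hB : 0 < B)
    (hsingle : ∀ i : U, c i ≤ B → ({i} : Finset U) ∈ I)
    (istar : U) (histar : c istar ≤ B) (hmax : ∀ i, c i ≤ B → v i ≤ v istar)
    (OPT : ℝ)
    (hOPT : IsGreatest {t : ℝ | ∃ T ∈ I, (∀ i ∈ T, c i ≤ B) ∧
      (∑ i ∈ T, c i) ≤ B ∧ t = ∑ i ∈ T, v i} OPT)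
    (OPT' : ℝ)
    (hOPT' : IsGreatest {t : ℝ | ∃ T ∈ I, (∀ i ∈ T, c i ≤ B ∧ i ≠ istar) ∧
      (∑ i ∈ T, c i) ≤ B ∧ t = ∑ i ∈ T, v i} OPT')
    (vi' : ℝ)
    (hvi' : IsGreatest (insert (0 : ℝ) {t : ℝ | ∃ i : U, (c i ≤ B ∧ i ≠ istar) ∧ t = v i}) vi')
    (ρ : ℝ) (hρ : 1 ≤ ρ)
    (vG : ℝ) (hG : vG ≥ (1 / (2 * ρ)) * (OPT' - vi')) :
    (2 * ρ + 2) * max (v istar) vG ≥ OPT := by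
  -- OPT ≤ OPT' + v istar
  obtain ⟨T, hTI, hTc, hTB, hTv⟩ := hOPT.1
  have hρ0 : (0:ℝ) < 2 * ρ := by linarith
  have hstep : OPT ≤ OPT' + v istar := by
    have hT' : (∑ i ∈ T.erase istar, v i) ≤ OPT' := by
      apply hOPT'.2
      refine ⟨T.erase istar, hI₂ _ _ hTI (Finset.erase_subset _ _), ?_, ?_, rfl⟩
      · intro i hi
        exact ⟨hTc i (Finset.mem_of_mem_erase hi), Finset.ne_of_mem_erase hi⟩
      · refine le_trans ?_ hTB
        exact Finset.sum_le_sum_of_subset_of_nonneg (Finset.erase_subset _ _)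
          (fun i _ _ => hc i)
    by_cases h : istar ∈ T
    · have := Finset.add_sum_erase T v h
      rw [hTv]
      linarith
    · rw [Finset.erase_eq_of_notMem h] at hT'
      have := (hv istar).le
      linarith [hTv ▸ hT']
  have hvi'le : vi' ≤ v istar := by
    rcases hvi'.1 with h | ⟨i, ⟨hiB, _⟩, rfl⟩
    · rw [h]; exact (hv istar).le
    · exact hmax i hiB
  have hG2 : OPT' - vi' ≤ 2 * ρ * vG := by
    rw [ge_iff_le, div_mul_eq_mul_div, one_mul, div_le_iff₀ hρ0] at hG
    linarith
  have h1 : v istar ≤ max (v istar) vG := le_max_left _ _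
  have h2 : vG ≤ max (v istar) vG := le_max_right _ _
  nlinarith [mul_le_mul_of_nonneg_left h2 hρ0.le]
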